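/- Let α > 2, r₀ > 0, c > 0 and 0 < β ≤ 1. On a probability space, let {(Q_k, h_k, T_k)}_{k≥2} be a mutually independent family of random variables where Q_k has the Gamma distribution with shape k and rate c/β, h_k is exponential with mean 1, and T_k is Bernoulli with P(T_k = 1) = β. Then the random series I = Σ_{k=2}^∞ (max{r₀², Q_k})^{−α/2} h_k T_k converges almost surely and E[I] = c r₀^{2−α}·α/(α−2) + β r₀^{−α}(e^{−(c/β)r₀²} − 1) − c^{α/2} β^{1−α/2} Γ(1 − α/2, (c/β) r₀²), where Γ(a, x) = ∫ₓ^∞ t^{a−1} e^{−t} dt is the upper incomplete gamma function. -/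

import Mathlib

open Real MeasureTheory ProbabilityTheory Set

/-- The upper incomplete gamma function `Γ(a,x) = ∫ₓ^∞ t^{a−1} e^{−t} dt`. -/
noncomputable def upperGamma (a x : ℝ) : ℝ :=
  ∫ t in Ioi x, t ^ (a - 1) * Real.exp (-t)

section Aux

lemma gin_exp_tsum (x : ℝ) : Real.exp x = ∑' n : ℕ, x ^ n / (Nat.factorial n : ℝ) := by
  rw [Real.exp_eq_exp_ℝ, NormedSpace.exp_eq_tsum_div]

lemma gin_pdf_eq (l x : ℝ) (hx : 0 ≤ x) (k : ℕ) : gammaPDFReal (k + 2) l x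
    = Real.exp (-(l * x)) * l * ((l * x) ^ (k + 1) / (Nat.factorial (k + 1) : ℝ)) := by
  rw [gammaPDFReal, if_pos hx]
  have hg : Real.Gamma ((k : ℝ) + 2) = (Nat.factorial (k + 1) : ℝ) := by
    have := Real.Gamma_nat_eq_factorial (k + 1)
    push_cast at this ⊢
    convert this using 2
    ring
  have hx1 : x ^ ((k : ℝ) + 2 - 1) = x ^ (k + 1 : ℕ) := by
    rw [show (k : ℝ) + 2 - 1 = ((k + 1 : ℕ) : ℝ) by push_cast; ring, Real.rpow_natCast]
  rw [hg, hx1, mul_pow]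
  have : l ^ ((k : ℝ) + 2) = l ^ (k + 2 : ℕ) := by
    rw [show ((k : ℝ) + 2) = ((k + 2 : ℕ) : ℝ) by push_cast; ring, Real.rpow_natCast]
  rw [this]
  have h2 : (Nat.factorial (k + 1) : ℝ) ≠ 0 := Nat.cast_ne_zero.mpr (Nat.factorial_ne_zero _)
  field_simp
  ring

lemma gin_summable_pdf (l x : ℝ) (hx : 0 ≤ x) :
    Summable fun k : ℕ => gammaPDFReal (k + 2) l x := by
  apply Summable.congr (f := fun k : ℕ =>
    Real.exp (-(l * x)) * l * ((l * x) ^ (k + 1) / (Nat.factorial (k + 1) : ℝ)))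
  · exact (((Real.summable_pow_div_factorial (l * x)).comp_injective
      (add_left_injective 1)).mul_left _)
  · exact fun k => (gin_pdf_eq l x hx k).symm

lemma gin_sum_pdf (l x : ℝ) (hx : 0 ≤ x) :
    ∑' k : ℕ, gammaPDFReal (k + 2) l x = l * (1 - Real.exp (-(l * x))) := by
  rw [tsum_congr (gin_pdf_eq l x hx), tsum_mul_left]
  have : ∑' k : ℕ, (l * x) ^ (k + 1) / (Nat.factorial (k + 1) : ℝ) = Real.exp (l * x) - 1 := by
    have h := gin_exp_tsum (l * x)
    rw [Summable.tsum_eq_zero_add (Real.summable_pow_div_factorial (l * x))] at h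
    simp at h
    linarith
  rw [this, Real.exp_neg]
  have : Real.exp (l * x) ≠ 0 := (Real.exp_pos _).ne'
  field_simp

lemma gin_piece1 (l a : ℝ) (ha : 0 ≤ a) :
    ∫ t in Ioc 0 a, l * (1 - Real.exp (-(l * t))) = l * a - 1 + Real.exp (-(l * a)) := by
  rw [← intervalIntegral.integral_of_le ha]
  have key : ∀ x ∈ uIcc (0:ℝ) a, HasDerivAt (fun t => l * t + Real.exp (-(l * t)))
      (l * (1 - Real.exp (-(l * x)))) x := by
    intro x _
    have h1 : HasDerivAt (fun t : ℝ => l * t) l x := by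
      simpa using (hasDerivAt_id x).const_mul l
    have h2 : HasDerivAt (fun t : ℝ => -(l * t)) (-l) x := by
      have := ((hasDerivAt_id' x).const_mul l).neg
      simp only [mul_one] at this
      exact this
    have h3 : HasDerivAt (fun t : ℝ => Real.exp (-(l * t)))
        (Real.exp (-(l * x)) * (-l)) x := h2.exp
    exact (h1.add h3).congr_deriv (by ring)
  have hcont : Continuous fun t : ℝ => l * (1 - Real.exp (-(l * t))) := by
    continuity
  rw [intervalIntegral.integral_eq_sub_of_hasDerivAt key (hcont.intervalIntegrable 0 a)]
  simp [Real.exp_zero]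
  ring

lemma gin_int_rpow_exp (p l a : ℝ) (hp : p < -1) (hl : 0 < l) (ha : 0 < a) :
    IntegrableOn (fun t : ℝ => t ^ p * Real.exp (-(l * t))) (Ioi a) := by
  apply Integrable.mono' (g := fun t : ℝ => t ^ p) (integrableOn_Ioi_rpow_of_lt hp ha)
  · exact ((measurable_id'.pow_const p).mul
      ((measurable_id'.const_mul l).neg.exp)).aestronglyMeasurable
  · filter_upwards [ae_restrict_mem measurableSet_Ioi] with t ht
    have ht0 : 0 < t := ha.trans ht
    rw [Real.norm_eq_abs, abs_of_nonneg (by positivity)]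
    have : Real.exp (-(l * t)) ≤ 1 := Real.exp_le_one_iff.mpr (by nlinarith)
    nlinarith [Real.rpow_pos_of_pos ht0 p, Real.exp_pos (-(l * t))]

lemma gin_piece2b (α l a : ℝ) (hl : 0 < l) (ha : 0 < a) :
    ∫ t in Ioi a, t ^ (-(α/2)) * Real.exp (-(l * t))
      = l ^ (α/2 - 1) * upperGamma (1 - α/2) (l * a) := by
  have key := integral_comp_mul_left_Ioi
    (fun u : ℝ => u ^ (-(α/2)) * Real.exp (-u)) a hl
  have h1 : ∀ t ∈ Ioi a, (l * t) ^ (-(α/2)) * Real.exp (-(l * t))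
      = l ^ (-(α/2)) * (t ^ (-(α/2)) * Real.exp (-(l * t))) := by
    intro t ht
    rw [Real.mul_rpow hl.le (le_of_lt (ha.trans ht))]
    ring
  rw [setIntegral_congr_fun measurableSet_Ioi h1, integral_const_mul] at key
  have hup : upperGamma (1 - α/2) (l * a)
      = ∫ u in Ioi (l * a), u ^ (-(α/2)) * Real.exp (-u) := by
    rw [upperGamma]; norm_num
  rw [hup, smul_eq_mul] at *
  have hln : (0:ℝ) < l ^ (-(α/2)) := Real.rpow_pos_of_pos hl _
  have h2 : ∫ t in Ioi a, t ^ (-(α/2)) * Real.exp (-(l * t))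
      = (l ^ (-(α/2)))⁻¹ * (l⁻¹ * ∫ u in Ioi (l * a), u ^ (-(α/2)) * Real.exp (-u)) := by
    rw [← key]; field_simp
  rw [h2, ← mul_assoc]
  congr 1
  rw [← Real.rpow_neg_one l, ← Real.rpow_neg hl.le, ← Real.rpow_add hl]
  ring_nf

/-- The main real integral computation. -/
lemma gin_main_integral (α r₀ l : ℝ) (hα : 2 < α) (hr₀ : 0 < r₀) (hl : 0 < l) :
    IntegrableOn (fun t : ℝ =>
        (max (r₀ ^ 2) t) ^ (-(α/2)) * (l * (1 - Real.exp (-(l * t))))) (Ioi 0) volume ∧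
    ∫ t in Ioi 0, (max (r₀ ^ 2) t) ^ (-(α/2)) * (l * (1 - Real.exp (-(l * t))))
      = r₀ ^ (-α) * (l * r₀ ^ 2 - 1 + Real.exp (-(l * r₀ ^ 2)))
        + l * ((r₀ ^ 2 : ℝ) ^ (1 - α/2) / (α/2 - 1))
        - l * (l ^ (α/2 - 1) * upperGamma (1 - α/2) (l * r₀ ^ 2)) := by
  set a : ℝ := r₀ ^ 2 with ha_def
  have ha : 0 < a := by positivity
  set F : ℝ → ℝ := fun t => (max a t) ^ (-(α/2)) * (l * (1 - Real.exp (-(l * t)))) with hF_def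
  have hp : -(α/2) < -1 := by linarith
  -- on Ioc 0 a, F t = a ^ (-(α/2)) * (l (1 - e^{-lt}))
  have hF1 : ∀ t ∈ Ioc (0:ℝ) a, F t = a ^ (-(α/2)) * (l * (1 - Real.exp (-(l * t)))) := by
    intro t ht
    simp only [hF_def, max_eq_left ht.2]
  have hF2 : ∀ t ∈ Ioi a, F t = t ^ (-(α/2)) * (l * (1 - Real.exp (-(l * t)))) := by
    intro t ht
    simp only [hF_def, max_eq_right (le_of_lt (show a < t from ht))]
  have hi1 : IntegrableOn F (Ioc 0 a) := by
    apply (Continuous.integrableOn_Ioc (by continuity :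
      Continuous fun t : ℝ => a ^ (-(α/2)) * (l * (1 - Real.exp (-(l * t)))))).congr_fun
      (fun t ht => (hF1 t ht).symm) measurableSet_Ioc
  have hmono : IntegrableOn (fun t : ℝ => t ^ (-(α/2))) (Ioi a) :=
    integrableOn_Ioi_rpow_of_lt hp ha
  have hi2exp : IntegrableOn (fun t : ℝ => t ^ (-(α/2)) * Real.exp (-(l * t))) (Ioi a) :=
    gin_int_rpow_exp _ l a hp hl ha
  have hi2' : IntegrableOn
      (fun t : ℝ => t ^ (-(α/2)) * (l * (1 - Real.exp (-(l * t))))) (Ioi a) := by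
    have : (fun t : ℝ => t ^ (-(α/2)) * (l * (1 - Real.exp (-(l * t)))))
        = fun t => l * (t ^ (-(α/2))) - l * (t ^ (-(α/2)) * Real.exp (-(l * t))) := by
      funext t; ring
    rw [this]
    exact (hmono.const_mul l).sub (hi2exp.const_mul l)
  have hi2 : IntegrableOn F (Ioi a) :=
    hi2'.congr_fun (fun t ht => (hF2 t ht).symm) measurableSet_Ioi
  have hunion : Ioc (0:ℝ) a ∪ Ioi a = Ioi 0 := Ioc_union_Ioi_eq_Ioi ha.le
  have hdisj : Disjoint (Ioc (0:ℝ) a) (Ioi a) := Ioc_disjoint_Ioi le_rfl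
  have hint : IntegrableOn F (Ioi 0) := by
    rw [← hunion]; exact hi1.union hi2
  refine ⟨hint, ?_⟩
  rw [← hunion, setIntegral_union hdisj measurableSet_Ioi hi1 hi2]
  have e1 : ∫ t in Ioc (0:ℝ) a, F t
      = a ^ (-(α/2)) * (l * a - 1 + Real.exp (-(l * a))) := by
    rw [setIntegral_congr_fun measurableSet_Ioc hF1, integral_const_mul, gin_piece1 l a ha.le]
  have e2 : ∫ t in Ioi a, F t
      = l * (a ^ (1 - α/2) / (α/2 - 1)) - l * (l ^ (α/2 - 1) * upperGamma (1 - α/2) (l * a)) := by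
    rw [setIntegral_congr_fun measurableSet_Ioi hF2]
    have : (fun t : ℝ => t ^ (-(α/2)) * (l * (1 - Real.exp (-(l * t)))))
        = fun t => l * (t ^ (-(α/2))) - l * (t ^ (-(α/2)) * Real.exp (-(l * t))) := by
      funext t; ring
    rw [this, integral_sub (hmono.const_mul l) (hi2exp.const_mul l),
      integral_const_mul, integral_const_mul, integral_Ioi_rpow_of_lt hp ha,
      gin_piece2b α l a hl ha]
    have h1 : -(α/2) + 1 = 1 - α/2 := by ring
    have h2 : (α/2 - 1) ≠ 0 := by intro h'; nlinarith
    rw [h1]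
    have h3 : (1 - α/2) ≠ 0 := by intro h'; nlinarith
    have h5 : -a ^ (1 - α/2) / (1 - α/2) = a ^ (1 - α/2) / (α/2 - 1) := by
      rw [div_eq_div_iff h3 h2]; ring
    rw [h5]
  rw [e1, e2]
  have haa : a ^ (-(α/2)) = r₀ ^ (-α) := by
    rw [ha_def, ← Real.rpow_natCast r₀ 2, ← Real.rpow_mul hr₀.le]
    congr 1
    push_cast
    ring
  rw [haa]
  ring


lemma gin_lint_exp : ∫⁻ x : ℝ, ENNReal.ofReal x ∂(expMeasure 1) = 1 := by
  rw [expMeasure, gammaMeasure,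
    lintegral_withDensity_eq_lintegral_mul _
      (by exact (measurable_gammaPDFReal 1 1).ennreal_ofReal : Measurable (gammaPDF 1 1))
      ENNReal.measurable_ofReal]
  have hpt : ∀ x : ℝ, (gammaPDF 1 1 * fun x => ENNReal.ofReal x) x
      = (Ioi (0:ℝ)).indicator (fun x => ENNReal.ofReal (Real.exp (-x) * x)) x := by
    intro x
    simp only [Pi.mul_apply]
    by_cases hx : 0 < x
    · rw [indicator_of_mem (mem_Ioi.mpr hx), gammaPDF_of_nonneg hx.le,
        ← ENNReal.ofReal_mul (by positivity)]
      congr 1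
      rw [Real.Gamma_one]
      norm_num
    · rw [indicator_of_notMem (by simpa using hx), ENNReal.ofReal_of_nonpos (not_lt.mp hx),
        mul_zero]
  rw [lintegral_congr hpt, lintegral_indicator measurableSet_Ioi]
  have hInt : IntegrableOn (fun x : ℝ => Real.exp (-x) * x) (Ioi 0) := by
    have := Real.GammaIntegral_convergent (by norm_num : (0:ℝ) < 2)
    apply this.congr_fun _ measurableSet_Ioi
    intro x hx
    norm_num [Real.rpow_one]
  rw [← ofReal_integral_eq_lintegral_ofReal hInt]
  · have := Real.Gamma_eq_integral (by norm_num : (0:ℝ) < 2)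
    rw [Real.Gamma_two] at this
    have h2 : ∫ x in Ioi (0:ℝ), Real.exp (-x) * x
        = ∫ x in Ioi (0:ℝ), Real.exp (-x) * x ^ ((2:ℝ) - 1) := by
      apply setIntegral_congr_fun measurableSet_Ioi
      intro x hx
      norm_num [Real.rpow_one]
    rw [h2, ← this, ENNReal.ofReal_one]
  · filter_upwards [ae_restrict_mem measurableSet_Ioi] with x hx
    have : (0:ℝ) < x := hx
    positivity

lemma gin_algebra (α r₀ c β : ℝ) (hα : 2 < α) (hr₀ : 0 < r₀) (hc : 0 < c) (hβ0 : 0 < β) :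
    (r₀ ^ (-α) * ((c/β) * r₀ ^ 2 - 1 + Real.exp (-((c/β) * r₀ ^ 2)))
      + (c/β) * ((r₀ ^ 2 : ℝ) ^ (1 - α/2) / (α/2 - 1))
      - (c/β) * ((c/β) ^ (α/2 - 1) * upperGamma (1 - α/2) ((c/β) * r₀ ^ 2))) * β
    = c * r₀ ^ (2 - α) * (α / (α - 2))
      + β * r₀ ^ (-α) * (Real.exp (-(c / β) * r₀ ^ 2) - 1)
      - c ^ (α / 2) * β ^ (1 - α / 2) * upperGamma (1 - α / 2) ((c / β) * r₀ ^ 2) := by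
  have hl : 0 < c / β := div_pos hc hβ0
  have h2 : (r₀ ^ 2 : ℝ) ^ (1 - α/2) = r₀ ^ (2 - α) := by
    rw [← Real.rpow_natCast r₀ 2, ← Real.rpow_mul hr₀.le]
    congr 1; push_cast; ring
  have h3 : r₀ ^ (-α) * r₀ ^ 2 = r₀ ^ (2 - α) := by
    rw [← Real.rpow_natCast r₀ 2, ← Real.rpow_add hr₀]
    congr 1; push_cast; ring
  have h45 : β * ((c/β) * (c/β) ^ (α/2 - 1)) = c ^ (α/2) * β ^ (1 - α/2) := by
    have h4 : (c/β) * (c/β) ^ (α/2 - 1) = (c/β) ^ (α/2) := by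
      nth_rewrite 1 [← Real.rpow_one (c/β)]
      rw [← Real.rpow_add hl]
      congr 1; ring
    rw [h4, Real.div_rpow hc.le hβ0.le, Real.rpow_sub hβ0, Real.rpow_one]
    field_simp [ne_of_gt (Real.rpow_pos_of_pos hβ0 (α/2))]
  have hexp : Real.exp (-(c/β) * r₀ ^ 2) = Real.exp (-((c/β) * r₀ ^ 2)) := by ring_nf
  rw [hexp, h2]
  have h6 : (α/2 - 1) ≠ 0 := by intro h'; nlinarith
  have h7 : (α - 2) ≠ 0 := by intro h'; nlinarith
  have hβ : β ≠ 0 := hβ0.ne'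
  generalize upperGamma (1 - α/2) ((c/β) * r₀ ^ 2) = G
  generalize hE : Real.exp (-((c/β) * r₀ ^ 2)) = E
  rw [← h45, ← h3]
  field_simp
  ring

end Aux

/-- Mean interference at the typical point of a β-Ginibre wireless network with bounded
power-law path loss `ℓ(r) = (max{r₀,r})^{−α}` and Rayleigh fading: if
`Q_k ~ Gamma(k, rate c/β)`, `h_k ~ Exp(1)` and `T_k ~ Bernoulli(β)` (`k ≥ 2`, encoded as
`k+2` for `k : ℕ`) are mutually independent, then the interference series
`I = Σ_{k≥2} (max{r₀², Q_k})^{−α/2} h_k T_k` converges a.s. and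
`E[I] = c r₀^{2−α} α/(α−2) + β r₀^{−α}(e^{−(c/β)r₀²} − 1)
 − c^{α/2} β^{1−α/2} Γ(1−α/2, (c/β)r₀²)`. -/
theorem ginibre_mean_interference {Ω : Type*} [MeasurableSpace Ω] (P : Measure Ω)
    [IsProbabilityMeasure P] (α r₀ c β : ℝ) (hα : 2 < α) (hr₀ : 0 < r₀) (hc : 0 < c)
    (hβ0 : 0 < β) (hβ1 : β ≤ 1)
    (Q h T : ℕ → Ω → ℝ)
    (hQm : ∀ k, Measurable (Q k)) (hhm : ∀ k, Measurable (h k)) (hTm : ∀ k, Measurable (T k))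
    (hQ : ∀ k : ℕ, Measure.map (Q k) P = gammaMeasure (k + 2) (c / β))
    (hh : ∀ k : ℕ, Measure.map (h k) P = expMeasure 1)
    (hT : ∀ k : ℕ, Measure.map (T k) P
      = ENNReal.ofReal (1 - β) • Measure.dirac (0 : ℝ) + ENNReal.ofReal β • Measure.dirac 1)
    (hIndep : iIndepFun
      (fun p : ℕ × Fin 3 => ![Q p.1, h p.1, T p.1] p.2) P) :
    (∀ᵐ ω ∂P, Summable fun k : ℕ =>
      (max (r₀ ^ 2) (Q k ω)) ^ (-(α / 2)) * h k ω * T k ω) ∧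
    ∫ ω, (∑' k : ℕ, (max (r₀ ^ 2) (Q k ω)) ^ (-(α / 2)) * h k ω * T k ω) ∂P
      = c * r₀ ^ (2 - α) * (α / (α - 2))
        + β * r₀ ^ (-α) * (Real.exp (-(c / β) * r₀ ^ 2) - 1)
        - c ^ (α / 2) * β ^ (1 - α / 2) * upperGamma (1 - α / 2) ((c / β) * r₀ ^ 2) := by
  classical
  have hl : 0 < c / β := div_pos hc hβ0
  set l : ℝ := c / β with hl_def
  set f : ℝ → ℝ := fun t => (max (r₀ ^ 2) t) ^ (-(α / 2)) with hf_def
  have hfm : Measurable f := (measurable_const.max measurable_id').pow_const _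
  have hf_nn : ∀ t, 0 ≤ f t := fun t =>
    Real.rpow_nonneg (le_trans (by positivity) (le_max_left _ _)) _
  set X : ℕ → Ω → ℝ := fun k ω => f (Q k ω) * h k ω * T k ω with hX_def
  have hXm : ∀ k, Measurable (X k) := fun k => ((hfm.comp (hQm k)).mul (hhm k)).mul (hTm k)
  have famMeas : ∀ p : ℕ × Fin 3, Measurable (![Q p.1, h p.1, T p.1] p.2) := by
    rintro ⟨k, j⟩
    fin_cases j
    · exact hQm k
    · exact hhm k
    · exact hTm k
  -- a.e. facts
  have hh_nn : ∀ k, ∀ᵐ ω ∂P, 0 ≤ h k ω := by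
    intro k
    rw [ae_iff]
    have hset : {ω | ¬ 0 ≤ h k ω} = h k ⁻¹' (Iio 0) := by ext ω; simp [not_le]
    rw [hset, ← Measure.map_apply (hhm k) measurableSet_Iio, hh k]
    show expMeasure 1 (Iio 0) = 0
    rw [expMeasure, gammaMeasure, withDensity_apply _ measurableSet_Iio]
    exact lintegral_gammaPDF_of_nonpos le_rfl
  have hT01 : ∀ k, ∀ᵐ ω ∂P, T k ω = 0 ∨ T k ω = 1 := by
    intro k
    rw [ae_iff]
    have hs : MeasurableSet (({0, 1} : Set ℝ)ᶜ) :=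
      (MeasurableSet.insert (measurableSet_singleton 1) 0).compl
    have hset : {ω | ¬ (T k ω = 0 ∨ T k ω = 1)} = T k ⁻¹' (({0,1} : Set ℝ)ᶜ) := by
      ext ω; simp
    rw [hset, ← Measure.map_apply (hTm k) hs, hT k]
    simp [Measure.dirac_apply' _ hs]
  -- marginal lintegrals
  have LH : ∀ k, ∫⁻ ω, ENNReal.ofReal (h k ω) ∂P = 1 := by
    intro k
    rw [← lintegral_map (show Measurable (fun x : ℝ => ENNReal.ofReal x) from
      ENNReal.measurable_ofReal) (hhm k), hh k]
    exact gin_lint_exp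
  have LT : ∀ k, ∫⁻ ω, ENNReal.ofReal (T k ω) ∂P = ENNReal.ofReal β := by
    intro k
    rw [← lintegral_map (show Measurable (fun x : ℝ => ENNReal.ofReal x) from
      ENNReal.measurable_ofReal) (hTm k), hT k,
      lintegral_add_measure, lintegral_smul_measure, lintegral_smul_measure,
      lintegral_dirac' _ ENNReal.measurable_ofReal, lintegral_dirac' _ ENNReal.measurable_ofReal]
    simp
  have LQ : ∀ k : ℕ, ∫⁻ ω, ENNReal.ofReal (f (Q k ω)) ∂P
      = ∫⁻ x, gammaPDF (k + 2) l x * ENNReal.ofReal (f x) ∂volume := by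
    intro k
    rw [← lintegral_map (show Measurable (fun x : ℝ => ENNReal.ofReal (f x)) from
      ENNReal.measurable_ofReal.comp hfm) (hQm k), hQ k, gammaMeasure,
      lintegral_withDensity_eq_lintegral_mul _
        (by exact (measurable_gammaPDFReal _ _).ennreal_ofReal :
          Measurable (gammaPDF (k + 2) (c / β)))
        (show Measurable (fun x : ℝ => ENNReal.ofReal (f x)) from
          ENNReal.measurable_ofReal.comp hfm)]
    rfl
  -- per-k lintegral via independence
  have keyK : ∀ k : ℕ, ∫⁻ ω, ENNReal.ofReal (X k ω) ∂P
      = (∫⁻ x, gammaPDF (k + 2) l x * ENNReal.ofReal (f x) ∂volume) * ENNReal.ofReal β := by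
    intro k
    have hae1 : (fun ω => ENNReal.ofReal (X k ω)) =ᵐ[P]
        fun ω => ENNReal.ofReal (f (Q k ω))
          * (ENNReal.ofReal (h k ω) * ENNReal.ofReal (T k ω)) := by
      filter_upwards [hh_nn k, hT01 k] with ω h1 h2
      have hT0 : 0 ≤ T k ω := by rcases h2 with h2 | h2 <;> simp [h2]
      show ENNReal.ofReal (f (Q k ω) * h k ω * T k ω) = _
      rw [ENNReal.ofReal_mul (mul_nonneg (hf_nn _) h1), ENNReal.ofReal_mul (hf_nn _), mul_assoc]
    rw [lintegral_congr_ae hae1]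
    have i1 : IndepFun (fun ω => (h k ω, T k ω)) (Q k) P := by
      have := hIndep.indepFun_prodMk famMeas (k,1) (k,2) (k,0) (by simp) (by simp)
      simpa using this
    have i1' : IndepFun (fun ω => ENNReal.ofReal (f (Q k ω)))
        (fun ω => ENNReal.ofReal (h k ω) * ENNReal.ofReal (T k ω)) P := by
      have := (i1.symm).comp
        (show Measurable (fun x : ℝ => ENNReal.ofReal (f x)) from
          ENNReal.measurable_ofReal.comp hfm)
        (show Measurable (fun p : ℝ × ℝ => ENNReal.ofReal p.1 * ENNReal.ofReal p.2) from
          (ENNReal.measurable_ofReal.comp measurable_fst).mul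
            (ENNReal.measurable_ofReal.comp measurable_snd))
      exact this
    have i2 : IndepFun (h k) (T k) P := by
      have := hIndep.indepFun (show ((k,1) : ℕ × Fin 3) ≠ (k,2) by simp)
      simpa using this
    have i2' : IndepFun (fun ω => ENNReal.ofReal (h k ω))
        (fun ω => ENNReal.ofReal (T k ω)) P :=
      i2.comp ENNReal.measurable_ofReal ENNReal.measurable_ofReal
    rw [lintegral_mul_eq_lintegral_mul_lintegral_of_indepFun''
        (show AEMeasurable (fun ω => ENNReal.ofReal (f (Q k ω))) P from
          ((ENNReal.measurable_ofReal.comp (hfm.comp (hQm k)))).aemeasurable)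
        (show AEMeasurable (fun ω => ENNReal.ofReal (h k ω) * ENNReal.ofReal (T k ω)) P from
          (((ENNReal.measurable_ofReal.comp (hhm k)).mul
            (ENNReal.measurable_ofReal.comp (hTm k)))).aemeasurable) i1',
      lintegral_mul_eq_lintegral_mul_lintegral_of_indepFun''
        (show AEMeasurable (fun ω => ENNReal.ofReal (h k ω)) P from
          (ENNReal.measurable_ofReal.comp (hhm k)).aemeasurable)
        (show AEMeasurable (fun ω => ENNReal.ofReal (T k ω)) P from
          (ENNReal.measurable_ofReal.comp (hTm k)).aemeasurable) i2',
      LH k, LT k, LQ k, one_mul]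
  -- sum of gamma densities
  have sumPDF : ∀ x : ℝ, ∑' k : ℕ, gammaPDF (k + 2) l x
      = (Ioi (0:ℝ)).indicator (fun x => ENNReal.ofReal (l * (1 - Real.exp (-(l * x))))) x := by
    intro x
    by_cases hx : 0 < x
    · rw [indicator_of_mem (mem_Ioi.mpr hx)]
      calc ∑' k : ℕ, gammaPDF (k + 2) l x
          = ∑' k : ℕ, ENNReal.ofReal (gammaPDFReal (k+2) l x) := rfl
        _ = ENNReal.ofReal (∑' k : ℕ, gammaPDFReal (k+2) l x) :=
            (ENNReal.ofReal_tsum_of_nonneg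
              (fun k => gammaPDFReal_nonneg (by positivity) hl _)
              (gin_summable_pdf l x hx.le)).symm
        _ = _ := by rw [gin_sum_pdf l x hx.le]
    · rw [indicator_of_notMem (by simpa using hx)]
      rcases lt_or_eq_of_le (not_lt.mp hx) with hx' | hx'
      · simp [gammaPDF_of_neg hx']
      · subst hx'
        have hz : ∀ k : ℕ, gammaPDF ((k : ℝ) + 2) l 0 = 0 := by
          intro k
          show ENNReal.ofReal (gammaPDFReal ((k : ℝ) + 2) l 0) = 0
          rw [gin_pdf_eq l 0 le_rfl k]
          simp
        simp [hz]
  -- the total integral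
  have hMain := gin_main_integral α r₀ l hα hr₀ hl
  set V : ℝ := ∫ t in Ioi 0, (max (r₀ ^ 2) t) ^ (-(α/2)) * (l * (1 - Real.exp (-(l * t))))
    with hV_def
  have hnnV : ∀ t ∈ Ioi (0:ℝ), 0 ≤ (max (r₀ ^ 2) t) ^ (-(α/2)) * (l * (1 - Real.exp (-(l * t)))) := by
    intro t ht
    have ht0 : (0:ℝ) < t := ht
    have h1 : Real.exp (-(l*t)) ≤ 1 := Real.exp_le_one_iff.mpr (by nlinarith)
    have h2 : 0 ≤ 1 - Real.exp (-(l*t)) := by linarith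
    exact mul_nonneg (hf_nn t) (mul_nonneg hl.le h2)
  have hVnn : 0 ≤ V := setIntegral_nonneg measurableSet_Ioi hnnV
  have Wsum : ∑' k : ℕ, ∫⁻ x, gammaPDF (k + 2) l x * ENNReal.ofReal (f x) ∂volume
      = ENNReal.ofReal V := by
    rw [← lintegral_tsum (fun k : ℕ =>
      (show AEMeasurable (fun x : ℝ => gammaPDF (k + 2) l x * ENNReal.ofReal (f x)) volume from
        ((measurable_gammaPDFReal _ _).ennreal_ofReal.mul
          (ENNReal.measurable_ofReal.comp hfm)).aemeasurable))]
    have hpt : ∀ x, ∑' k : ℕ, gammaPDF (k + 2) l x * ENNReal.ofReal (f x)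
        = (Ioi (0:ℝ)).indicator
            (fun x => ENNReal.ofReal (f x * (l * (1 - Real.exp (-(l * x)))))) x := by
      intro x
      rw [ENNReal.tsum_mul_right, sumPDF x]
      by_cases hx : 0 < x
      · rw [indicator_of_mem (mem_Ioi.mpr hx), indicator_of_mem (mem_Ioi.mpr hx),
          ← ENNReal.ofReal_mul (by
            have h1 : Real.exp (-(l*x)) ≤ 1 := Real.exp_le_one_iff.mpr (by nlinarith)
            have h2 : 0 ≤ 1 - Real.exp (-(l*x)) := by linarith
            positivity), mul_comm]
      · rw [indicator_of_notMem (by simpa using hx), indicator_of_notMem (by simpa using hx),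
          zero_mul]
    rw [lintegral_congr hpt, lintegral_indicator measurableSet_Ioi,
      ← ofReal_integral_eq_lintegral_ofReal hMain.1
        (by filter_upwards [ae_restrict_mem measurableSet_Ioi] with x hx using hnnV x hx)]
  -- assemble
  set S : Ω → ENNReal := fun ω => ∑' k, ENNReal.ofReal (X k ω) with hS_def
  have hSm : Measurable S :=
    Measurable.ennreal_tsum (fun k => ENNReal.measurable_ofReal.comp (hXm k))
  have hSint : ∫⁻ ω, S ω ∂P = ENNReal.ofReal (V * β) := by
    rw [hS_def, lintegral_tsum (fun k : ℕ =>
      (show AEMeasurable (fun ω => ENNReal.ofReal (X k ω)) P from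
        (ENNReal.measurable_ofReal.comp (hXm k)).aemeasurable))]
    calc ∑' k, ∫⁻ ω, ENNReal.ofReal (X k ω) ∂P
        = ∑' k : ℕ, (∫⁻ x, gammaPDF (k + 2) l x * ENNReal.ofReal (f x) ∂volume)
            * ENNReal.ofReal β := tsum_congr keyK
      _ = (∑' k : ℕ, ∫⁻ x, gammaPDF (k + 2) l x * ENNReal.ofReal (f x) ∂volume)
            * ENNReal.ofReal β := ENNReal.tsum_mul_right
      _ = ENNReal.ofReal V * ENNReal.ofReal β := by rw [Wsum]
      _ = ENNReal.ofReal (V * β) := (ENNReal.ofReal_mul hVnn).symm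
  have hSfin : ∀ᵐ ω ∂P, S ω < ⊤ :=
    ae_lt_top hSm (by rw [hSint]; exact ENNReal.ofReal_ne_top)
  have hsummable : ∀ᵐ ω ∂P, (Summable fun k => X k ω) ∧ (∑' k, X k ω = (S ω).toReal) := by
    filter_upwards [hSfin, ae_all_iff.mpr hh_nn, ae_all_iff.mpr hT01] with ω hfin hhω hTω
    have hXnn : ∀ k, 0 ≤ X k ω := by
      intro k
      have hT0 : 0 ≤ T k ω := by rcases hTω k with h2 | h2 <;> simp [h2]
      exact mul_nonneg (mul_nonneg (hf_nn _) (hhω k)) hT0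
    have h1 : Summable fun k => (ENNReal.ofReal (X k ω)).toReal :=
      ENNReal.summable_toReal hfin.ne
    have h2 : ∀ k, (ENNReal.ofReal (X k ω)).toReal = X k ω :=
      fun k => ENNReal.toReal_ofReal (hXnn k)
    constructor
    · exact h1.congr h2
    · rw [hS_def, ENNReal.tsum_toReal_eq (fun k => ENNReal.ofReal_ne_top)]
      exact (tsum_congr h2).symm
  refine ⟨hsummable.mono (fun ω hω => hω.1), ?_⟩
  have hIeq : ∫ ω, (∑' k, X k ω) ∂P = ∫ ω, (S ω).toReal ∂P :=
    integral_congr_ae (hsummable.mono fun ω hω => hω.2)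
  show ∫ ω, (∑' k, X k ω) ∂P = _
  rw [hIeq, integral_toReal hSm.aemeasurable hSfin, hSint,
    ENNReal.toReal_ofReal (mul_nonneg hVnn hβ0.le), hMain.2]
  exact gin_algebra α r₀ c β hα hr₀ hc hβ0
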